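/- Let G be a simple graph on a finite vertex set and let f be a strong integer additive set-labeling of G. Then f is also a strong integer additive set-labeling of the complement graph Ḡ if and only if the difference sets D_{f(v)} of the set-labels of the vertices of G are pairwise disjoint, i.e., D_{f(u)} ∩ D_{f(v)} = ∅ for all distinct vertices u, v. -/
import Mathlib


open Finset Pointwise

/-- The difference set of a finset of naturals:
the set of positive differences of distinct elements. -/
def diffSet (A : Finset ℕ) : Finset ℕ :=
  ((A ×ˢ A).filter fun p => p.2 < p.1).image fun p => p.1 - p.2

lemma mem_diffSet {A : Finset ℕ} {x : ℕ} :
    x ∈ diffSet A ↔ ∃ a ∈ A, ∃ b ∈ A, b < a ∧ a - b = x := by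
  simp only [diffSet, mem_image, mem_filter, mem_product, Prod.exists]
  constructor
  · rintro ⟨a, b, ⟨⟨ha, hb⟩, hlt⟩, hx⟩
    exact ⟨a, ha, b, hb, hlt, hx⟩
  · rintro ⟨a, ha, b, hb, hlt, hx⟩
    exact ⟨a, b, ⟨⟨ha, hb⟩, hlt⟩, hx⟩

lemma key (A B : Finset ℕ) :
    (A + B).card = A.card * B.card ↔ Disjoint (diffSet A) (diffSet B) := by
  rw [← Finset.image_add_product, ← Finset.card_product, Finset.card_image_iff]
  constructor
  · intro hinj
    rw [Finset.disjoint_left]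
    intro d hdA hdB
    obtain ⟨a, ha, a', ha', hlt, hd⟩ := mem_diffSet.mp hdA
    obtain ⟨b, hb, b', hb', hlt', hd'⟩ := mem_diffSet.mp hdB
    have h1 : ((a, b') : ℕ × ℕ) ∈ (A ×ˢ B : Finset (ℕ × ℕ)) :=
      Finset.mem_product.mpr ⟨ha, hb'⟩
    have h2 : ((a', b) : ℕ × ℕ) ∈ (A ×ˢ B : Finset (ℕ × ℕ)) :=
      Finset.mem_product.mpr ⟨ha', hb⟩
    have := hinj h1 h2 (by simp only []; omega)
    have : a = a' := congrArg Prod.fst this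
    omega
  · intro hdisj
    rintro ⟨a, b⟩ hab ⟨a', b'⟩ hab' hsum
    simp only [Finset.mem_coe, Finset.mem_product] at hab hab'
    simp only [] at hsum
    rcases lt_trichotomy a a' with h | h | h
    · exfalso
      have hdA : a' - a ∈ diffSet A := mem_diffSet.mpr ⟨a', hab'.1, a, hab.1, h, rfl⟩
      have hdB : a' - a ∈ diffSet B := mem_diffSet.mpr ⟨b, hab.2, b', hab'.2, by omega, by omega⟩
      exact Finset.disjoint_left.mp hdisj hdA hdB
    · have : b = b' := by omega
      simp [h, this]
    · exfalso
      have hdA : a - a' ∈ diffSet A := mem_diffSet.mpr ⟨a, hab.1, a', hab'.1, h, rfl⟩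
      have hdB : a - a' ∈ diffSet B := mem_diffSet.mpr ⟨b', hab'.2, b, hab.2, by omega, by omega⟩
      exact Finset.disjoint_left.mp hdisj hdA hdB

/-- `f` is a strong integer additive set-labeling of `G`. -/
def IsStrongIASL {V : Type*} (G : SimpleGraph V) (f : V → Finset ℕ) : Prop :=
  (∀ v, (f v).Nonempty) ∧ Function.Injective f ∧
    ∀ u v, G.Adj u v → (f u + f v).card = (f u).card * (f v).card

/-- A strong IASL `f` of `G` is also a strong IASL of the complement `Ḡ` iff the
difference sets of the set-labels of the vertices of `G` are pairwise disjoint. -/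
theorem strongIASL_compl_iff {V : Type*} [Fintype V] (G : SimpleGraph V)
    (f : V → Finset ℕ) (hf : IsStrongIASL G f) :
    IsStrongIASL Gᶜ f ↔
      ∀ u v : V, u ≠ v → Disjoint (diffSet (f u)) (diffSet (f v)) := by
  constructor
  · intro h u v huv
    by_cases hadj : G.Adj u v
    · exact (key _ _).mp (hf.2.2 u v hadj)
    · exact (key _ _).mp (h.2.2 u v ⟨huv, hadj⟩)
  · intro h
    exact ⟨hf.1, hf.2.1, fun u v hadj => (key _ _).mpr (h u v hadj.1)⟩
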